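/- arXiv:1612.09069 — 4 statements merged into one kernel-verified Lean document; each statement's English description precedes it below -/
import Mathlib

section
/- Let x ∈ E and let x⁺ be an exact proximal point of z = x − η·∇f(x), i.e., x⁺ is a global minimizer of the function w ↦ (1/2)·‖w − z‖² + η·g(w). Then F(x⁺) ≤ F(x) − ((ρ − L)/2)·‖x⁺ − x‖². -/
open intervalIntegral in
theorem descent_lemma_aux
    {E : Type*} [NormedAddCommGroup E] [InnerProductSpace ℝ E] [CompleteSpace E]
    (f : E → ℝ) (f' : E → E) (L : ℝ) (hL : 0 ≤ L)
    (hf : ∀ x, HasGradientAt f (f' x) x)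
    (hlip : ∀ x y, ‖f' x - f' y‖ ≤ L * ‖x - y‖) (x y : E) :
    f y ≤ f x + inner ℝ (f' x) (y - x) + L / 2 * ‖y - x‖ ^ 2 := by
  set v := y - x with hv
  set γ : ℝ → E := fun t => x + t • v with hγ
  have hcont : Continuous f' := by
    apply (LipschitzWith.of_dist_le_mul (K := L.toNNReal) ?_).continuous
    intro a b
    rw [dist_eq_norm, dist_eq_norm, Real.coe_toNNReal L hL]
    exact hlip a b
  have hγc : Continuous γ := by continuity
  have hderiv : ∀ t : ℝ, HasDerivAt (fun t => f (γ t))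
      (inner ℝ (f' (γ t)) v) t := by
    intro t
    have h1 : HasDerivAt γ v t := by
      simpa only [id_eq, one_smul] using ((hasDerivAt_id t).smul_const v).const_add x
    have h2 := (hf (γ t)).hasFDerivAt.comp_hasDerivAt t h1
    exact h2
  have hcont' : Continuous fun t : ℝ => (inner ℝ (f' (γ t)) v : ℝ) :=
    (hcont.comp hγc).inner continuous_const
  have hint : (∫ t in (0:ℝ)..1, (inner ℝ (f' (γ t)) v : ℝ)) = f (γ 1) - f (γ 0) :=
    integral_eq_sub_of_hasDerivAt (fun t _ => hderiv t)
      (hcont'.intervalIntegrable 0 1)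
  have hbound : ∫ t in (0:ℝ)..1, (inner ℝ (f' (γ t)) v : ℝ) ≤
      ∫ t in (0:ℝ)..1, (inner ℝ (f' x) v + L * ‖v‖ ^ 2 * t) := by
    apply intervalIntegral.integral_mono_on (by norm_num)
      (hcont'.intervalIntegrable 0 1)
      (((by fun_prop : Continuous fun t : ℝ => (inner ℝ (f' x) v : ℝ) + L * ‖v‖ ^ 2 * t).intervalIntegrable 0 1))
    intro t ht
    rcases ht with ⟨ht0, ht1⟩
    have : (inner ℝ (f' (γ t)) v : ℝ) - inner ℝ (f' x) v = inner ℝ (f' (γ t) - f' x) v := by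
      rw [inner_sub_left]
    have hb : (inner ℝ (f' (γ t) - f' x) v : ℝ) ≤ L * ‖v‖ ^ 2 * t := by
      calc (inner ℝ (f' (γ t) - f' x) v : ℝ) ≤ ‖f' (γ t) - f' x‖ * ‖v‖ :=
            real_inner_le_norm _ _
        _ ≤ (L * ‖γ t - x‖) * ‖v‖ := by
            gcongr; exact hlip _ _
        _ = L * ‖v‖ ^ 2 * t := by
            have : γ t - x = t • v := by simp [hγ]
            rw [this, norm_smul, Real.norm_eq_abs, abs_of_nonneg ht0]
            ring
    linarith [this ▸ hb]
  have hval : ∫ t in (0:ℝ)..1, ((inner ℝ (f' x) v : ℝ) + L * ‖v‖ ^ 2 * t) =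
      inner ℝ (f' x) v + L / 2 * ‖v‖ ^ 2 := by
    rw [intervalIntegral.integral_add (intervalIntegrable_const)
      ((by fun_prop : Continuous fun t : ℝ => L * ‖v‖ ^ 2 * t).intervalIntegrable 0 1),
      intervalIntegral.integral_const_mul, integral_id]
    simp
    ring
  have h0 : γ 0 = x := by simp [hγ]
  have h1 : γ 1 = y := by simp [hγ, hv]
  rw [h0, h1] at hint
  linarith [hval ▸ hbound, hint]

/-- sufficient decrease of an exact proximal-gradient step.
If `x⁺` is an exact proximal point of `z = x - η • ∇f x`, then
`F x⁺ ≤ F x - ((ρ - L)/2) * ‖x⁺ - x‖²`. -/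
theorem exact_prox_sufficient_decrease
    {E : Type*} [NormedAddCommGroup E] [InnerProductSpace ℝ E] [FiniteDimensional ℝ E]
    (f g F : E → ℝ) (f' : E → E) (L η ρ : ℝ)
    (hL : 0 < L)
    (hf : ∀ x, HasGradientAt f (f' x) x)
    (hlip : ∀ x y, ‖f' x - f' y‖ ≤ L * ‖x - y‖)
    (hg : LowerSemicontinuous g)
    (hF : ∀ x, F x = f x + g x)
    (hη : 0 < η) (hηL : η < 1 / L) (hρ : ρ = 1 / η)
    (x xp : E)
    (hxp : ∀ w : E, (1 / 2) * ‖xp - (x - η • f' x)‖ ^ 2 + η * g xp ≤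
      (1 / 2) * ‖w - (x - η • f' x)‖ ^ 2 + η * g w) :
    F xp ≤ F x - ((ρ - L) / 2) * ‖xp - x‖ ^ 2 := by
  have hdesc := descent_lemma_aux f f' L hL.le hf hlip x xp
  have hp := hxp x
  set a := xp - x with ha
  set b := f' x with hb
  have h1 : xp - (x - η • b) = a + η • b := by rw [ha]; abel
  have h2 : x - (x - η • b) = η • b := by abel
  rw [h1, h2] at hp
  have hnorm : ‖a + η • b‖ ^ 2 = ‖a‖ ^ 2 + 2 * (η * inner ℝ a b) + ‖η • b‖ ^ 2 := by
    rw [norm_add_sq_real, real_inner_smul_right]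
  rw [hnorm] at hp
  -- hp : (1/2)(‖a‖² + 2η⟪a,b⟫ + ‖η•b‖²) + η g xp ≤ (1/2)‖η•b‖² + η g x
  have hsym : (inner ℝ b a : ℝ) = inner ℝ a b := real_inner_comm a b
  rw [hF xp, hF x, hρ]
  rw [hsym] at hdesc
  have h3 : η * (f xp + g xp) ≤ η * (f x + g x - ((1 / η - L) / 2) * ‖a‖ ^ 2) := by
    have := mul_le_mul_of_nonneg_left hdesc hη.le
    have hηinv : η * (1 / η) = 1 := by field_simp
    nlinarith [this, hp]
  linarith [(mul_le_mul_iff_right₀ hη).mp h3]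
end

section
/- Suppose that in Algorithm niAPG every proximal step is exact, i.e., for every k ≥ 1, x_{k+1} is a global minimizer of w ↦ (1/2)·‖w − z_k‖² + η·g(w). Then for every k ≥ 1: F(x_{k+1}) ≤ min(F(y_k), Δ_k) − ((ρ − L)/2)·‖x_{k+1} − v_k‖². -/
open InnerProductSpace intervalIntegral

lemma descent_lemma {E : Type*} [NormedAddCommGroup E] [InnerProductSpace ℝ E]
    [FiniteDimensional ℝ E]
    (f : E → ℝ) (f' : E → E) (L : ℝ)
    (hf : ∀ x, HasGradientAt f (f' x) x)
    (hlip : ∀ x y, ‖f' x - f' y‖ ≤ L * ‖x - y‖)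
    (p d : E) :
    f (p + d) ≤ f p + inner ℝ (f' p) d + L / 2 * ‖d‖ ^ 2 := by
  have hcont : Continuous f' := by
    have : LipschitzWith (Real.toNNReal L) f' := by
      apply LipschitzWith.of_dist_le_mul
      intro a b
      rw [dist_eq_norm, dist_eq_norm]
      calc ‖f' a - f' b‖ ≤ L * ‖a - b‖ := hlip a b
        _ ≤ (Real.toNNReal L) * ‖a - b‖ := by
            gcongr; exact Real.le_coe_toNNReal L
    exact this.continuous
  set φ' : ℝ → ℝ := fun t => inner ℝ (f' (p + t • d)) d with hφ'
  have hderiv : ∀ t ∈ Set.uIcc (0:ℝ) 1,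
      HasDerivAt (fun t : ℝ => f (p + t • d)) (φ' t) t := by
    intro t _
    have h1 : HasDerivAt (fun t : ℝ => p + t • d) d t := by
      simpa using ((hasDerivAt_id t).smul_const d).const_add p
    have h2 := (hf (p + t • d)).hasFDerivAt.comp_hasDerivAt t h1
    simpa [hφ', toDual_apply_apply, Function.comp_def] using h2
  have hcφ' : Continuous φ' := by
    exact (hcont.comp (continuous_const.add (continuous_id.smul continuous_const))).inner
      continuous_const
  have hint : ∫ t in (0:ℝ)..1, φ' t = f (p + d) - f p := by
    have := intervalIntegral.integral_eq_sub_of_hasDerivAt hderiv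
      (hcφ'.intervalIntegrable 0 1)
    simpa using this
  have hbound : ∀ t ∈ Set.Icc (0:ℝ) 1, φ' t ≤ inner ℝ (f' p) d + (L * ‖d‖ ^ 2) * t := by
    intro t ht
    have h3 : φ' t - inner ℝ (f' p) d = inner ℝ (f' (p + t • d) - f' p) d := by
      rw [inner_sub_left]
    have h4 : (inner ℝ (f' (p + t • d) - f' p) d : ℝ) ≤ ‖f' (p + t • d) - f' p‖ * ‖d‖ :=
      real_inner_le_norm _ _
    have h5 : ‖f' (p + t • d) - f' p‖ ≤ L * (t * ‖d‖) := by
      have := hlip (p + t • d) p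
      simpa [norm_smul, abs_of_nonneg ht.1] using this
    have hd : (0:ℝ) ≤ ‖d‖ := norm_nonneg d
    nlinarith [norm_nonneg (f' (p + t • d) - f' p)]
  have hmono : ∫ t in (0:ℝ)..1, φ' t ≤
      ∫ t in (0:ℝ)..1, (inner ℝ (f' p) d + (L * ‖d‖ ^ 2) * t) := by
    apply intervalIntegral.integral_mono_on (by norm_num)
      (hcφ'.intervalIntegrable 0 1)
      ((continuous_const.add (continuous_const.mul continuous_id)).intervalIntegrable 0 1)
    exact hbound
  have hval : ∫ t in (0:ℝ)..1, (inner ℝ (f' p) d + (L * ‖d‖ ^ 2) * t)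
      = inner ℝ (f' p) d + L / 2 * ‖d‖ ^ 2 := by
    rw [intervalIntegral.integral_add (g := fun t : ℝ => L * ‖d‖ ^ 2 * t) (intervalIntegrable_const)
      ((continuous_const.mul continuous_id' : Continuous fun t : ℝ => L * ‖d‖ ^ 2 * t).intervalIntegrable 0 1)]
    rw [intervalIntegral.integral_const_mul, integral_id]
    norm_num
    ring
  linarith [hmono.trans_eq hval, hint.symm.le, hint.le]


/-- Proposition 2: sufficient decrease for niAPG with exact proximal steps.
If in Algorithm niAPG every proximal step is exact, then for every `k ≥ 1`,
`F x_{k+1} ≤ min (F y_k) Δ_k - ((ρ - L)/2) * ‖x_{k+1} - v_k‖²`. -/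
theorem niAPG_exact_sufficient_decrease
    {E : Type*} [NormedAddCommGroup E] [InnerProductSpace ℝ E] [FiniteDimensional ℝ E]
    (f g F : E → ℝ) (f' : E → E) (L η ρ : ℝ)
    (hL : 0 < L)
    (hf : ∀ x, HasGradientAt f (f' x) x)
    (hlip : ∀ x y, ‖f' x - f' y‖ ≤ L * ‖x - y‖)
    (hg : LowerSemicontinuous g)
    (hF : ∀ x, F x = f x + g x)
    (hη : 0 < η) (hηL : η < 1 / L) (hρ : ρ = 1 / η)
    (q : ℕ) (x y v z : ℕ → E) (Δ : ℕ → ℝ)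
    (hx01 : x 0 = x 1)
    (hy : ∀ k, 1 ≤ k → y k = x k + ((((k : ℝ) - 1) / ((k : ℝ) + 2)) • (x k - x (k - 1))))
    (hΔ : ∀ k, ∀ hk : 1 ≤ k, Δ k =
      (Finset.Icc (max 1 (k - q)) k).sup' (Finset.nonempty_Icc.mpr (by omega))
        (fun t => F (x t)))
    (hv : ∀ k, 1 ≤ k → v k = if F (y k) ≤ Δ k then y k else x k)
    (hz : ∀ k, 1 ≤ k → z k = v k - η • f' (v k))
    (hprox : ∀ k, 1 ≤ k → ∀ w : E,
      (1 / 2) * ‖x (k + 1) - z k‖ ^ 2 + η * g (x (k + 1)) ≤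
        (1 / 2) * ‖w - z k‖ ^ 2 + η * g w) :
    ∀ k, 1 ≤ k →
      F (x (k + 1)) ≤ min (F (y k)) (Δ k) - ((ρ - L) / 2) * ‖x (k + 1) - v k‖ ^ 2 := by
  intro k hk
  set p := v k with hp
  set u := x (k + 1) with hu
  have hz' := hz k hk
  have key := hprox k hk p
  have e1 : u - z k = (u - p) + η • f' p := by rw [hz']; abel
  have e2 : p - z k = η • f' p := by rw [hz']; abel
  have n1 : ‖u - z k‖ ^ 2
      = ‖u - p‖ ^ 2 + 2 * (η * inner ℝ (u - p) (f' p)) + ‖η • f' p‖ ^ 2 := by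
    rw [e1, norm_add_sq_real, real_inner_smul_right]
  have n2 : ‖p - z k‖ ^ 2 = ‖η • f' p‖ ^ 2 := by rw [e2]
  rw [n1, n2] at key
  have hinv : η * (1 / η) = 1 := mul_one_div_cancel hη.ne'
  have hstep : inner ℝ (f' p) (u - p) + g u ≤ g p - ρ / 2 * ‖u - p‖ ^ 2 := by
    rw [hρ, real_inner_comm]
    nlinarith [key, hinv, sq_nonneg ‖u - p‖]
  have hdesc : f u ≤ f p + inner ℝ (f' p) (u - p) + L / 2 * ‖u - p‖ ^ 2 := by
    have := descent_lemma f f' L hf hlip p (u - p)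
    simpa using this
  have hFv : F u ≤ F p - (ρ - L) / 2 * ‖u - p‖ ^ 2 := by
    rw [hF, hF]; linarith
  have hmin : F p ≤ min (F (y k)) (Δ k) := by
    by_cases hcase : F (y k) ≤ Δ k
    · have : p = y k := by rw [hp, hv k hk, if_pos hcase]
      rw [this, min_eq_left hcase]
    · have hpv : p = x k := by rw [hp, hv k hk, if_neg hcase]
      have hxk : F (x k) ≤ Δ k := by
        rw [hΔ k hk]
        exact Finset.le_sup' (fun t => F (x t))
          (Finset.mem_Icc.mpr ⟨by omega, le_refl k⟩)
      rw [hpv, min_eq_right (not_le.mp hcase).le]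
      exact hxk
  linarith
end

section
/- Let v ∈ E, set z = v − η·∇f(v), let x̂ be a global minimizer of h(w) = (1/2)·‖w − z‖² + η·g(w), and let x⁺ ∈ E satisfy h(x⁺) ≤ h(x̂) + ε for some ε ≥ 0. Then ⟨x⁺ − v, ∇f(v)⟩ + (ρ/2)·‖x⁺ − v‖² + g(x⁺) ≤ g(v) + ρ·ε. -/
open scoped RealInnerProductSpace

/-- key inequality for an ε-inexact proximal step.
If `x̂` minimizes `h(w) = (1/2)‖w - z‖² + η g(w)` with `z = v - η • ∇f v`, and
`h x⁺ ≤ h x̂ + ε`, then `⟪x⁺ - v, ∇f v⟫ + (ρ/2)‖x⁺ - v‖² + g x⁺ ≤ g v + ρ ε`. -/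
theorem inexact_prox_key_inequality
    {E : Type*} [NormedAddCommGroup E] [InnerProductSpace ℝ E] [FiniteDimensional ℝ E]
    (f g F : E → ℝ) (f' : E → E) (L η ρ : ℝ)
    (hL : 0 < L)
    (hf : ∀ x, HasGradientAt f (f' x) x)
    (hlip : ∀ x y, ‖f' x - f' y‖ ≤ L * ‖x - y‖)
    (hg : LowerSemicontinuous g)
    (hF : ∀ x, F x = f x + g x)
    (hη : 0 < η) (hηL : η < 1 / L) (hρ : ρ = 1 / η)
    (v xhat xp : E) (ε : ℝ) (hε : 0 ≤ ε)
    (hxhat : ∀ w : E, (1 / 2) * ‖xhat - (v - η • f' v)‖ ^ 2 + η * g xhat ≤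
      (1 / 2) * ‖w - (v - η • f' v)‖ ^ 2 + η * g w)
    (hxp : (1 / 2) * ‖xp - (v - η • f' v)‖ ^ 2 + η * g xp ≤
      ((1 / 2) * ‖xhat - (v - η • f' v)‖ ^ 2 + η * g xhat) + ε) :
    ⟪xp - v, f' v⟫ + (ρ / 2) * ‖xp - v‖ ^ 2 + g xp ≤ g v + ρ * ε := by
  have e0 : xp - (v - η • f' v) = (xp - v) + η • f' v := by abel
  have e1 : ‖xp - (v - η • f' v)‖ ^ 2
      = ‖xp - v‖ ^ 2 + 2 * (η * ⟪xp - v, f' v⟫) + η ^ 2 * ‖f' v‖ ^ 2 := by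
    rw [e0, norm_add_sq_real, real_inner_smul_right, norm_smul, Real.norm_eq_abs,
      mul_pow, sq_abs]
  have e2 : ‖v - (v - η • f' v)‖ ^ 2 = η ^ 2 * ‖f' v‖ ^ 2 := by
    have : v - (v - η • f' v) = η • f' v := by abel
    rw [this, norm_smul, Real.norm_eq_abs, mul_pow, sq_abs]
  have h2 : (1 / 2) * ‖xp - v‖ ^ 2 + η * ⟪xp - v, f' v⟫ + η * g xp ≤ η * g v + ε := by
    nlinarith [hxhat v, hxp]
  subst hρ
  have hηpos : (0:ℝ) < 1 / η := by positivity
  calc ⟪xp - v, f' v⟫ + (1 / η / 2) * ‖xp - v‖ ^ 2 + g xp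
      = (1 / η) * ((1 / 2) * ‖xp - v‖ ^ 2 + η * ⟪xp - v, f' v⟫ + η * g xp) := by
        field_simp; ring
    _ ≤ (1 / η) * (η * g v + ε) := by
        exact mul_le_mul_of_nonneg_left h2 (le_of_lt hηpos)
    _ = g v + 1 / η * ε := by field_simp
end

section
/- Let (v_j)_{j≥1} and (x_j⁺)_{j≥1} be sequences in E such that for every j, x_j⁺ is an exact proximal point of v_j − η·∇f(v_j) (a global minimizer of w ↦ (1/2)·‖w − (v_j − η·∇f(v_j))‖² + η·g(w)), and suppose v_j → x* and x_j⁺ → x* for some x* ∈ E. Then g(x_j⁺) → g(x*) (hence also F(x_j⁺) → F(x*)), and x* is an exact proximal point of x* − η·∇f(x*), i.e., x* is a global minimizer of w ↦ (1/2)·‖w − (x* − η·∇f(x*))‖² + η·g(w). -/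
open Filter

/-- limit points of exact proximal steps are proximal fixed points.
If `x_j⁺` is an exact proximal point of `v_j − η ∇f(v_j)` for each `j`, and both `v_j → x*`
and `x_j⁺ → x*`, then `g(x_j⁺) → g(x*)` (hence `F(x_j⁺) → F(x*)`) and `x*` is an exact
proximal point of `x* − η ∇f(x*)`. -/
theorem exact_prox_limit_point
    {E : Type*} [NormedAddCommGroup E] [InnerProductSpace ℝ E] [FiniteDimensional ℝ E]
    (f g F : E → ℝ) (f' : E → E) (L η ρ : ℝ)
    (hL : 0 < L)
    (hf : ∀ x, HasGradientAt f (f' x) x)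
    (hlip : ∀ x y, ‖f' x - f' y‖ ≤ L * ‖x - y‖)
    (hg : LowerSemicontinuous g)
    (hF : ∀ x, F x = f x + g x)
    (hη : 0 < η) (hηL : η < 1 / L) (hρ : ρ = 1 / η)
    (v xp : ℕ → E) (xstar : E)
    (hprox : ∀ j : ℕ, ∀ w : E,
      (1 / 2) * ‖xp j - (v j - η • f' (v j))‖ ^ 2 + η * g (xp j) ≤
        (1 / 2) * ‖w - (v j - η • f' (v j))‖ ^ 2 + η * g w)
    (hv : Tendsto v atTop (nhds xstar))
    (hxp : Tendsto xp atTop (nhds xstar)) :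
    Tendsto (fun j => g (xp j)) atTop (nhds (g xstar)) ∧
    Tendsto (fun j => F (xp j)) atTop (nhds (F xstar)) ∧
    (∀ w : E, (1 / 2) * ‖xstar - (xstar - η • f' xstar)‖ ^ 2 + η * g xstar ≤
      (1 / 2) * ‖w - (xstar - η • f' xstar)‖ ^ 2 + η * g w) := by
  -- f' is continuous (Lipschitz)
  have hf'cont : Continuous f' := by
    refine (LipschitzWith.of_dist_le_mul (K := L.toNNReal) ?_).continuous
    intro x y
    rw [dist_eq_norm, dist_eq_norm, Real.coe_toNNReal _ hL.le]
    exact hlip x y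
  -- the targets of v j - η • f'(v j)
  have htarget : Tendsto (fun j => v j - η • f' (v j)) atTop
      (nhds (xstar - η • f' xstar)) :=
    hv.sub ((hf'cont.tendsto xstar).comp hv |>.const_smul η)
  -- q j → q*
  have hq : Tendsto (fun j => (1 / 2) * ‖xp j - (v j - η • f' (v j))‖ ^ 2) atTop
      (nhds ((1 / 2) * ‖xstar - (xstar - η • f' xstar)‖ ^ 2)) := by
    exact (((hxp.sub htarget).norm.pow 2).const_mul _)
  -- g (xp j) → g xstar
  have hgt : Tendsto (fun j => g (xp j)) atTop (nhds (g xstar)) := by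
    rw [tendsto_order]
    constructor
    · intro a ha
      exact hxp.eventually (hg xstar a ha)
    · intro a ha
      -- from hprox with w = xstar
      have hb : Tendsto (fun j => ((1 / 2) * ‖xstar - (v j - η • f' (v j))‖ ^ 2
            + η * g xstar - (1 / 2) * ‖xp j - (v j - η • f' (v j))‖ ^ 2) / η)
          atTop (nhds (g xstar)) := by
        have : Tendsto (fun j => (1 / 2) * ‖xstar - (v j - η • f' (v j))‖ ^ 2
              + η * g xstar - (1 / 2) * ‖xp j - (v j - η • f' (v j))‖ ^ 2)
            atTop (nhds (η * g xstar)) := by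
          have h1 : Tendsto (fun j => (1 / 2) * ‖xstar - (v j - η • f' (v j))‖ ^ 2)
              atTop (nhds ((1 / 2) * ‖xstar - (xstar - η • f' xstar)‖ ^ 2)) :=
            (((tendsto_const_nhds.sub htarget).norm.pow 2).const_mul _)
          have := (h1.add_const (η * g xstar)).sub hq
          simpa using this
        have := this.div_const η
        rwa [mul_div_cancel_left₀ _ hη.ne'] at this
      have := hb.eventually (eventually_lt_nhds ha)
      filter_upwards [this] with j hj
      have hp := hprox j xstar
      have h1 : η * g (xp j) ≤ (1 / 2) * ‖xstar - (v j - η • f' (v j))‖ ^ 2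
          + η * g xstar - (1 / 2) * ‖xp j - (v j - η • f' (v j))‖ ^ 2 := by linarith
      have h2 : η * g (xp j) / η < a :=
        lt_of_le_of_lt (div_le_div_of_nonneg_right h1 hη.le) hj
      rwa [mul_div_cancel_left₀ _ hη.ne'] at h2
  have hfcont : Continuous f := by
    have : Differentiable ℝ f := fun x => (hf x).hasFDerivAt.differentiableAt
    exact this.continuous
  refine ⟨hgt, ?_, ?_⟩
  · have : Tendsto (fun j => f (xp j) + g (xp j)) atTop (nhds (f xstar + g xstar)) :=
      ((hfcont.tendsto xstar).comp hxp).add hgt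
    simpa [hF] using this
  · intro w
    have hLHS : Tendsto (fun j => (1 / 2) * ‖xp j - (v j - η • f' (v j))‖ ^ 2 + η * g (xp j))
        atTop (nhds ((1 / 2) * ‖xstar - (xstar - η • f' xstar)‖ ^ 2 + η * g xstar)) :=
      hq.add (hgt.const_mul η)
    have hRHS : Tendsto (fun j => (1 / 2) * ‖w - (v j - η • f' (v j))‖ ^ 2 + η * g w)
        atTop (nhds ((1 / 2) * ‖w - (xstar - η • f' xstar)‖ ^ 2 + η * g w)) :=
      ((((tendsto_const_nhds.sub htarget).norm.pow 2).const_mul _).add_const _)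
    exact le_of_tendsto_of_tendsto' hLHS hRHS (fun j => hprox j w)
end
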